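/- For every non-negative integer L, \(\sum_{j=-\infty}^{\infty} (-1)^j q^{j^2} \left(\frac{j+1}{3}\right) \binom{2L+1}{L-j}_{q^2} = \frac{(q^3;q^6)_L}{(q;q^2)_L}\). The sum is finite since the q-binomial coefficient vanishes for j < -(L+1) and j > L. -/

import Mathlib

open Finset

/-- The finite q-Pochhammer symbol `(a;q)_n`. -/
noncomputable def qPoch (a q : RatFunc ℚ) (n : ℕ) : RatFunc ℚ :=
  ∏ k ∈ Finset.range n, (1 - a * q ^ k)

/-- The q-binomial coefficient `[top choose bot]_q`, zero unless `0 ≤ bot ≤ top`. -/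
noncomputable def qBinom (q : RatFunc ℚ) (top bot : ℤ) : RatFunc ℚ :=
  if 0 ≤ bot ∧ bot ≤ top then
    qPoch q q top.toNat / (qPoch q q bot.toNat * qPoch q q (top - bot).toNat)
  else 0

/-- The Legendre symbol modulo 3. -/
def leg3 (j : ℤ) : ℤ := if j % 3 = 1 then 1 else if j % 3 = 2 then -1 else 0

/-- `1/(q;q)_k`, with the convention that it is zero for negative `k`. -/
noncomputable def invPoch (q : RatFunc ℚ) (k : ℤ) : RatFunc ℚ :=
  if 0 ≤ k then (qPoch q q k.toNat)⁻¹ else 0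

/-- The generic variable `q` in the field of rational functions. -/
noncomputable def Xq : RatFunc ℚ := RatFunc.X


variable {F : Type*} [Field F]

noncomputable def qPochG (a q : F) (n : ℕ) : F := ∏ k ∈ Finset.range n, (1 - a * q ^ k)

noncomputable def qBinomG (q : F) (top bot : ℤ) : F :=
  if 0 ≤ bot ∧ bot ≤ top then
    qPochG q q top.toNat / (qPochG q q bot.toNat * qPochG q q (top - bot).toNat)
  else 0

section general
variable (q : F)

lemma pochQ_ne (hq : ∀ m : ℕ, 1 - q ^ (m+1) ≠ 0) (n : ℕ) : qPochG (q^2) (q^2) n ≠ 0 := by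
  rw [qPochG]
  apply Finset.prod_ne_zero_iff.2
  intro k _
  have : q ^ 2 * (q ^ 2) ^ k = q ^ (2*k+1+1) := by ring
  rw [this]
  exact hq _

lemma pochQ_succ (n : ℕ) : qPochG (q^2) (q^2) (n+1) = qPochG (q^2) (q^2) n * (1 - q^(2*n+2)) := by
  rw [qPochG, qPochG, Finset.prod_range_succ]
  congr 1
  congr 1
  ring

noncomputable def bn2 (q : F) (n k : ℕ) : F :=
  if k ≤ n then qPochG (q^2) (q^2) n / (qPochG (q^2) (q^2) k * qPochG (q^2) (q^2) (n-k)) else 0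

lemma bn2_self (hq : ∀ m : ℕ, 1 - q ^ (m+1) ≠ 0) (n : ℕ) : bn2 q n n = 1 := by
  rw [bn2, if_pos le_rfl]
  simp [Nat.sub_self, qPochG]
  exact pochQ_ne q hq n

lemma bn2_zero (hq : ∀ m : ℕ, 1 - q ^ (m+1) ≠ 0) (n : ℕ) : bn2 q n 0 = 1 := by
  rw [bn2, if_pos (Nat.zero_le n)]
  simp [qPochG]
  exact pochQ_ne q hq n

lemma bn2_pascal (hq : ∀ m : ℕ, 1 - q ^ (m+1) ≠ 0) (n m : ℕ) (h : m ≤ n) :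
    bn2 q (n+1) (m+1) = bn2 q n (m+1) + q^(2*(n-m)) * bn2 q n m := by
  rcases Nat.lt_or_ge m n with hlt | hge
  · -- m + 1 ≤ n
    obtain ⟨e, rfl⟩ : ∃ e, n = m + 1 + e := ⟨n - (m+1), by omega⟩
    have h1 : m + 1 + e + 1 - (m + 1) = e + 1 := by omega
    have h2 : m + 1 + e - (m + 1) = e := by omega
    have h3 : m + 1 + e - m = e + 1 := by omega
    rw [bn2, bn2, bn2, if_pos (by omega), if_pos (by omega), if_pos (by omega), h1, h2, h3]
    have e1 : qPochG (q^2) (q^2) (m+1+e+1) = qPochG (q^2) (q^2) (m+1+e) * (1 - q^(2*(m+1+e)+2)) :=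
      pochQ_succ q (m+1+e)
    have e2 : qPochG (q^2) (q^2) (e+1) = qPochG (q^2) (q^2) e * (1 - q^(2*e+2)) := pochQ_succ q e
    have e3 : qPochG (q^2) (q^2) (m+1) = qPochG (q^2) (q^2) m * (1 - q^(2*m+2)) := pochQ_succ q m
    rw [e1, e2, e3]
    have n1 := pochQ_ne q hq (m+1+e)
    have n2 := pochQ_ne q hq e
    have n3 := pochQ_ne q hq m
    have z1 : (1 - q^(2*(m+1+e)+2)) ≠ 0 := by have := hq (2*(m+1+e)+1); simpa using this
    have z2 : (1 - q^(2*e+2)) ≠ 0 := by have := hq (2*e+1); simpa using this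
    have z3 : (1 - q^(2*m+2)) ≠ 0 := by have := hq (2*m+1); simpa using this
    field_simp
    ring
  · -- m = n
    have : m = n := by omega
    subst this
    rw [bn2_self q hq, bn2_self q hq]
    rw [show bn2 q m (m+1) = 0 from by rw [bn2, if_neg (by omega)]]
    simp

lemma bn2_big (n k : ℕ) (h : n < k) : bn2 q n k = 0 := by
  rw [bn2, if_neg (by omega)]

lemma qbinom_thm (hq : ∀ m : ℕ, 1 - q ^ (m+1) ≠ 0) (w : F) (n : ℕ) :
    ∑ m ∈ Finset.range (n+1), w^m * q^(m*(m-1)) * bn2 q n m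
      = ∏ k ∈ Finset.range n, (1 + w * q^(2*k)) := by
  induction n with
  | zero => simp [bn2_zero q hq]
  | succ n ih =>
    have key : ∀ i, i ≤ n → w^(i+1) * q^((i+1)*i) * q^(2*(n-i)) = (w*q^(2*n)) * (w^i * q^(i*(i-1))) := by
      intro i hi
      obtain ⟨e, rfl⟩ : ∃ e, n = i + e := ⟨n - i, by omega⟩
      have hs : i + e - i = e := by omega
      rw [hs, mul_assoc, ← pow_add q]
      rcases i with _ | j
      · ring_nf
      · rw [show (j+1+1)*(j+1) + 2*e = 2*(j+1+e) + (j+1)*(j+1-1) from by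
          simp only [Nat.add_sub_cancel]; ring]
        rw [pow_add q]
        ring
    calc ∑ m ∈ Finset.range (n+2), w^m * q^(m*(m-1)) * bn2 q (n+1) m
        = (∑ i ∈ Finset.range (n+1), w^(i+1) * q^((i+1)*(i+1-1)) * bn2 q (n+1) (i+1))
            + w^0 * q^(0*(0-1)) * bn2 q (n+1) 0 := by
          exact Finset.sum_range_succ' _ (n+1)
      _ = (∑ i ∈ Finset.range (n+1),
            (w^(i+1) * q^((i+1)*(i+1-1)) * bn2 q n (i+1)
              + (w*q^(2*n)) * (w^i * q^(i*(i-1)) * bn2 q n i))) + 1 := by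
          rw [bn2_zero q hq]
          congr 1
          · apply Finset.sum_congr rfl
            intro i hi
            rw [Finset.mem_range] at hi
            rw [bn2_pascal q hq n i (by omega), mul_add]
            congr 1
            rw [show w^(i+1) * q^((i+1)*(i+1-1)) * (q^(2*(n-i)) * bn2 q n i)
                  = (w^(i+1) * q^((i+1)*(i+1-1)) * q^(2*(n-i))) * bn2 q n i from by ring,
              show (i+1)*(i+1-1) = (i+1)*i from by simp, key i (by omega)]
            ring
          · simp
      _ = ((∑ i ∈ Finset.range (n+1), w^(i+1) * q^((i+1)*(i+1-1)) * bn2 q n (i+1)) + 1)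
            + (w*q^(2*n)) * ∑ i ∈ Finset.range (n+1), w^i * q^(i*(i-1)) * bn2 q n i := by
          rw [Finset.sum_add_distrib, Finset.mul_sum]
          ring
      _ = (∑ m ∈ Finset.range (n+2), w^m * q^(m*(m-1)) * bn2 q n m)
            + (w*q^(2*n)) * ∑ i ∈ Finset.range (n+1), w^i * q^(i*(i-1)) * bn2 q n i := by
          congr 1
          rw [Finset.sum_range_succ' (fun m => w^m * q^(m*(m-1)) * bn2 q n m) (n+1)]
          simp [bn2_zero q hq]
      _ = (∑ m ∈ Finset.range (n+1), w^m * q^(m*(m-1)) * bn2 q n m)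
            + (w*q^(2*n)) * ∑ i ∈ Finset.range (n+1), w^i * q^(i*(i-1)) * bn2 q n i := by
          rw [Finset.sum_range_succ]
          rw [bn2_big q n (n+1) (by omega)]
          ring
      _ = ∏ k ∈ Finset.range (n+1), (1 + w * q^(2*k)) := by
          rw [ih, Finset.prod_range_succ]
          ring

lemma qBinomG_eq_bn2 (n m : ℕ) (h : m ≤ n) : qBinomG (q^2) (n : ℤ) (m : ℤ) = bn2 q n m := by
  rw [qBinomG, bn2, if_pos ⟨Int.natCast_nonneg m, by exact_mod_cast h⟩, if_pos h]
  rw [show (n:ℤ) - (m:ℤ) = ((n - m : ℕ) : ℤ) from by omega]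
  rw [Int.toNat_natCast, Int.toNat_natCast, Int.toNat_natCast]

lemma lemA (hq0 : q ≠ 0) (hq : ∀ m : ℕ, 1 - q ^ (m+1) ≠ 0) (z : F) (hz : z ≠ 0) (L : ℕ) :
    ∑ j ∈ Finset.Icc (-(L:ℤ)-1) (L:ℤ), (-1:F)^j * q^(j^2) * z^j * qBinomG (q^2) (2*(L:ℤ)+1) ((L:ℤ) - j)
    = (-1:F)^L * q^(L^2) * z^L *
        ∏ k ∈ Finset.range (2*L+1), (1 + (-z⁻¹ * q * (q^(2*L))⁻¹) * q^(2*k)) := by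
  have himg : Finset.Icc (-(L:ℤ)-1) (L:ℤ)
      = (Finset.range (2*L+2)).image (fun m : ℕ => (L:ℤ) - m) := by
    ext j
    simp only [Finset.mem_image, Finset.mem_range, Finset.mem_Icc]
    constructor
    · intro h
      exact ⟨(L - j).toNat, by omega, by omega⟩
    · rintro ⟨m, hm, rfl⟩
      omega
  rw [himg, Finset.sum_image (by intro a _ b _ h; have h' : (L:ℤ) - a = L - b := h; omega)]
  have expand : ∀ m : ℕ, (-1:F)^((L:ℤ)-m) * q^(((L:ℤ)-m)^2) * z^((L:ℤ)-m)
      = (-1:F)^L * q^(L^2) * z^L * ((-z⁻¹ * q * (q^(2*L))⁻¹)^m * q^(m*(m-1))) := by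
    intro m
    rw [zpow_sub₀ (by norm_num : (-1:F) ≠ 0), zpow_sub₀ hz]
    rw [show ((L:ℤ)-m)^2 = ((L^2:ℕ):ℤ) + ((m*(m-1):ℕ):ℤ) + (m:ℤ) - ((2*L*m:ℕ):ℤ) from by
      cases m with
      | zero => push_cast; ring
      | succ k => simp only [Nat.add_sub_cancel]; push_cast; ring]
    rw [zpow_sub₀ hq0, zpow_add₀ hq0, zpow_add₀ hq0]
    rw [zpow_natCast, zpow_natCast, zpow_natCast, zpow_natCast, zpow_natCast, zpow_natCast,
      zpow_natCast, zpow_natCast]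
    have hqm : q ^ (2*L*m) ≠ 0 := pow_ne_zero _ hq0
    have hzm : z ^ m ≠ 0 := pow_ne_zero _ hz
    field_simp
    ring_nf
    rw [show ((-1:F))^(m*2) = 1 from Even.neg_one_pow ⟨m, by ring⟩]
    rw [inv_pow, inv_pow]
    field_simp
  calc ∑ m ∈ Finset.range (2*L+2),
        (-1:F)^((L:ℤ)-m) * q^(((L:ℤ)-m)^2) * z^((L:ℤ)-m) * qBinomG (q^2) (2*(L:ℤ)+1) ((L:ℤ) - ((L:ℤ)-m))
      = ∑ m ∈ Finset.range (2*L+2),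
        ((-1:F)^L * q^(L^2) * z^L) * ((-z⁻¹ * q * (q^(2*L))⁻¹)^m * q^(m*(m-1)) * bn2 q (2*L+1) m) := by
        apply Finset.sum_congr rfl
        intro m hm
        rw [Finset.mem_range] at hm
        rw [show (L:ℤ) - ((L:ℤ)-m) = (m:ℤ) from by ring,
          show (2*(L:ℤ)+1) = ((2*L+1 : ℕ):ℤ) from by push_cast; ring,
          qBinomG_eq_bn2 q (2*L+1) m (by omega), expand m]
        ring
    _ = (-1:F)^L * q^(L^2) * z^L *
        ∏ k ∈ Finset.range (2*L+1), (1 + (-z⁻¹ * q * (q^(2*L))⁻¹) * q^(2*k)) := by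
        rw [← Finset.mul_sum]
        congr 1
        have := qbinom_thm q hq (-z⁻¹ * q * (q^(2*L))⁻¹) (2*L+1)
        rw [show 2*L+1+1 = 2*L+2 from rfl] at this
        rw [← this]

lemma sum_odd_sq (L : ℕ) : ∑ i ∈ Finset.range L, (2*i+1) = L^2 := by
  induction L with
  | zero => simp
  | succ n ih => rw [Finset.sum_range_succ, ih]; ring

lemma pair_id (c u : F) (hc : c^2 + c + 1 = 0) (hc0 : c ≠ 0) (hu : u ≠ 0) :
    (1 - c⁻¹ * u⁻¹) * (1 - c⁻¹ * u) = (-1) * c^2 * u⁻¹ * (1 + u + u^2) := by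
  have h3 : c^3 = 1 := by linear_combination (c-1)*hc
  have hinv : c⁻¹ = c^2 := by
    exact inv_eq_of_mul_eq_one_right (by linear_combination h3)
  rw [hinv]
  field_simp
  ring_nf
  linear_combination u*hc + u*c*h3

lemma c_cube (c : F) (hc : c^2 + c + 1 = 0) : c^3 = 1 := by linear_combination (c-1)*hc

lemma c_inv (c : F) (hc : c^2 + c + 1 = 0) : c⁻¹ = c^2 :=
  inv_eq_of_mul_eq_one_right (by linear_combination c_cube c hc)

lemma prodEval (hq0 : q ≠ 0) (c : F) (hc : c^2+c+1=0) (hc0 : c ≠ 0) (L : ℕ) :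
    ∏ k ∈ Finset.range (2*L+1), (1 + (-c⁻¹ * q * (q^(2*L))⁻¹) * q^(2*k))
    = (1 - c^2 * q^(2*L+1)) * ((-1)^L * c^(2*L) * (q^(L^2))⁻¹ *
        ∏ k ∈ Finset.range L, (1 + q^(2*k+1) + q^(4*k+2))) := by
  have hinv := c_inv c hc
  rw [Finset.prod_range_succ]
  have hlast : 1 + (-c⁻¹ * q * (q^(2*L))⁻¹) * q^(2*(2*L)) = 1 - c^2 * q^(2*L+1) := by
    rw [hinv]
    field_simp
    ring
  rw [hlast]
  have hadd : ∀ w : F, ∏ k ∈ Finset.range (2*L), (1 + w * q^(2*k))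
      = (∏ i ∈ Finset.range L, (1 + w * q^(2*i)))
        * ∏ i ∈ Finset.range L, (1 + w * q^(2*(L+i))) := by
    intro w
    rw [show (2*L) = L + L from by omega]
    exact Finset.prod_range_add _ L L
  rw [hadd,
    ← Finset.prod_range_reflect (fun i => 1 + (-c⁻¹ * q * (q^(2*L))⁻¹) * q^(2*i)) L,
    ← Finset.prod_mul_distrib]
  have hterm : ∀ i ∈ Finset.range L,
      (1 + (-c⁻¹ * q * (q^(2*L))⁻¹) * q^(2*(L-1-i))) * (1 + (-c⁻¹ * q * (q^(2*L))⁻¹) * q^(2*(L+i)))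
      = ((-1) * c^2) * ((q^(2*i+1))⁻¹ * (1 + q^(2*i+1) + q^(4*i+2))) := by
    intro i hi
    rw [Finset.mem_range] at hi
    obtain ⟨e, rfl⟩ : ∃ e, L = i + 1 + e := ⟨L - (i+1), by omega⟩
    have h1 : i + 1 + e - 1 - i = e := by omega
    rw [h1]
    have hA : (-c⁻¹ * q * (q^(2*(i+1+e)))⁻¹) * q^(2*e) = -(c⁻¹ * (q^(2*i+1))⁻¹) := by
      field_simp
      ring
    have hB : (-c⁻¹ * q * (q^(2*(i+1+e)))⁻¹) * q^(2*((i+1+e)+i)) = -(c⁻¹ * q^(2*i+1)) := by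
      field_simp
      ring
    rw [hA, hB]
    have := pair_id c (q^(2*i+1)) hc hc0 (pow_ne_zero _ hq0)
    rw [show 1 + q^(2*i+1) + q^(4*i+2) = 1 + q^(2*i+1) + (q^(2*i+1))^2 from by ring]
    calc (1 + -(c⁻¹ * (q^(2*i+1))⁻¹)) * (1 + -(c⁻¹ * q^(2*i+1)))
        = (1 - c⁻¹ * (q^(2*i+1))⁻¹) * (1 - c⁻¹ * q^(2*i+1)) := by ring
      _ = (-1) * c^2 * (q^(2*i+1))⁻¹ * (1 + q^(2*i+1) + (q^(2*i+1))^2) := this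
      _ = ((-1) * c^2) * ((q^(2*i+1))⁻¹ * (1 + q^(2*i+1) + (q^(2*i+1))^2)) := by ring
  rw [Finset.prod_congr rfl hterm, Finset.prod_mul_distrib, Finset.prod_const, Finset.card_range,
    Finset.prod_mul_distrib]
  rw [show (∏ x ∈ Finset.range L, (q ^ (2*x+1))⁻¹) = (q ^ (L^2))⁻¹ from by
    rw [Finset.prod_inv_distrib, Finset.prod_pow_eq_pow_sum, sum_odd_sq]]
  rw [show ((-1 : F) * c^2)^L = (-1)^L * c^(2*L) from by rw [mul_pow, ← pow_mul]]
  ring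

lemma Ssum (hq0 : q ≠ 0) (hq : ∀ m : ℕ, 1 - q ^ (m+1) ≠ 0) (c : F)
    (hc : c^2 + c + 1 = 0) (hc0 : c ≠ 0) (L : ℕ) :
    ∑ j ∈ Finset.Icc (-(L:ℤ)-1) (L:ℤ), (-1:F)^j * q^(j^2) * c^j * qBinomG (q^2) (2*(L:ℤ)+1) ((L:ℤ)-j)
    = (1 - c^2 * q^(2*L+1)) * ∏ k ∈ Finset.range L, (1 + q^(2*k+1) + q^(4*k+2)) := by
  rw [lemA q hq0 hq c hc0 L]
  rw [show ∏ k ∈ Finset.range (2*L+1), (1 + -c⁻¹ * q * (q^(2*L))⁻¹ * q^(2*k))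
      = ∏ k ∈ Finset.range (2*L+1), (1 + (-c⁻¹ * q * (q^(2*L))⁻¹) * q^(2*k)) from rfl]
  rw [prodEval q hq0 c hc hc0 L]
  have hm : ((-1:F))^L * (-1)^L = 1 := by rw [← mul_pow]; norm_num
  have hc3L : c^L * c^(2*L) = 1 := by
    rw [← pow_add, show L + 2*L = 3*L from by omega, pow_mul, c_cube c hc, one_pow]
  have hqL : q^(L^2) ≠ 0 := pow_ne_zero _ hq0
  calc (-1:F)^L * q^(L^2) * c^L *
        ((1 - c^2*q^(2*L+1)) * ((-1)^L * c^(2*L) * (q^(L^2))⁻¹ *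
          ∏ k ∈ Finset.range L, (1 + q^(2*k+1) + q^(4*k+2))))
      = (((-1:F))^L * (-1)^L) * (c^L * c^(2*L)) * (q^(L^2) * (q^(L^2))⁻¹) *
          ((1 - c^2*q^(2*L+1)) * ∏ k ∈ Finset.range L, (1 + q^(2*k+1) + q^(4*k+2))) := by ring
    _ = (1 - c^2*q^(2*L+1)) * ∏ k ∈ Finset.range L, (1 + q^(2*k+1) + q^(4*k+2)) := by
        rw [hm, hc3L, mul_inv_cancel₀ hqL]; ring

lemma leg3_mul (c : F) (hc : c^2 + c + 1 = 0) (hc0 : c ≠ 0) (i : ℤ) :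
    (leg3 i : F) * (c - c^2) = c^i - (c^2)^i := by
  have h3 : c^3 = 1 := c_cube c hc
  have hz3 : c^(3:ℤ) = 1 := by rw [show (3:ℤ) = ((3:ℕ):ℤ) from rfl, zpow_natCast, h3]
  have hc20 : c^2 ≠ 0 := pow_ne_zero _ hc0
  have hz3' : (c^2)^(3:ℤ) = 1 := by
    rw [show (3:ℤ) = ((3:ℕ):ℤ) from rfl, zpow_natCast, ← pow_mul,
      show 2*3 = 3*2 from rfl, pow_mul, h3, one_pow]
  have hr0 : 0 ≤ i % 3 := Int.emod_nonneg i (by norm_num)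
  have hr3 : i % 3 < 3 := Int.emod_lt_of_pos i (by norm_num)
  have hi : i = 3*(i/3) + i % 3 := (Int.mul_ediv_add_emod i 3).symm
  have hcz : c^i = c^(i % 3) := by
    conv_lhs => rw [hi]
    rw [zpow_add₀ hc0, zpow_mul, hz3, one_zpow, one_mul]
  have hcz2 : (c^2)^i = (c^2)^(i % 3) := by
    conv_lhs => rw [hi]
    rw [zpow_add₀ hc20, zpow_mul, hz3', one_zpow, one_mul]
  rw [hcz, hcz2, leg3]
  interval_cases h : i % 3
  · norm_num
  · norm_num [zpow_one]
  · rw [show ((2:ℤ)) = ((2:ℕ):ℤ) from rfl, zpow_natCast, zpow_natCast]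
    norm_num
    linear_combination -c*h3

theorem keyGen (q c : F) (hq0 : q ≠ 0) (hq : ∀ m : ℕ, 1 - q^(m+1) ≠ 0)
    (hc : c^2 + c + 1 = 0) (h3F : (3:F) ≠ 0) (L : ℕ) :
    ∑ j ∈ Finset.Icc (-(L:ℤ)-1) (L:ℤ),
      (-1:F)^j * q^(j^2) * (leg3 (j+1) : F) * qBinomG (q^2) (2*(L:ℤ)+1) ((L:ℤ)-j)
    = ∏ k ∈ Finset.range L, (1 + q^(2*k+1) + q^(4*k+2)) := by
  have hc0 : c ≠ 0 := by intro h; rw [h] at hc; norm_num at hc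
  have hc1 : c ≠ 1 := by intro h; rw [h] at hc; apply h3F; linear_combination hc
  have hc20 : c^2 ≠ 0 := pow_ne_zero _ hc0
  have hc2 : (c^2)^2 + c^2 + 1 = 0 := by linear_combination c*(c_cube c hc) + hc
  have hsub : c - c^2 ≠ 0 := by
    intro h
    apply hc1
    rcases mul_eq_zero.1 (show c*(1-c) = (0:F) from by linear_combination h) with h' | h'
    · exact absurd h' hc0
    · linear_combination -h'
  apply mul_right_cancel₀ hsub
  rw [Finset.sum_mul]
  calc ∑ j ∈ Finset.Icc (-(L:ℤ)-1) (L:ℤ),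
        ((-1:F)^j * q^(j^2) * (leg3 (j+1) : F) * qBinomG (q^2) (2*(L:ℤ)+1) ((L:ℤ)-j)) * (c - c^2)
      = ∑ j ∈ Finset.Icc (-(L:ℤ)-1) (L:ℤ),
        (c * ((-1:F)^j * q^(j^2) * c^j * qBinomG (q^2) (2*(L:ℤ)+1) ((L:ℤ)-j))
          - c^2 * ((-1:F)^j * q^(j^2) * (c^2)^j * qBinomG (q^2) (2*(L:ℤ)+1) ((L:ℤ)-j))) := by
        apply Finset.sum_congr rfl
        intro j _
        rw [show ((-1:F)^j * q^(j^2) * (leg3 (j+1) : F) * qBinomG (q^2) (2*(L:ℤ)+1) ((L:ℤ)-j)) * (c - c^2)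
            = ((-1:F)^j * q^(j^2) * qBinomG (q^2) (2*(L:ℤ)+1) ((L:ℤ)-j)) * ((leg3 (j+1) : F) * (c - c^2)) from by
          ring]
        rw [leg3_mul c hc hc0 (j+1), zpow_add₀ hc0 j 1, zpow_add₀ hc20 j 1, zpow_one, zpow_one]
        ring
    _ = c * (∑ j ∈ Finset.Icc (-(L:ℤ)-1) (L:ℤ),
            (-1:F)^j * q^(j^2) * c^j * qBinomG (q^2) (2*(L:ℤ)+1) ((L:ℤ)-j))
        - c^2 * (∑ j ∈ Finset.Icc (-(L:ℤ)-1) (L:ℤ),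
            (-1:F)^j * q^(j^2) * (c^2)^j * qBinomG (q^2) (2*(L:ℤ)+1) ((L:ℤ)-j)) := by
        rw [Finset.sum_sub_distrib, ← Finset.mul_sum, ← Finset.mul_sum]
    _ = c * ((1 - c^2*q^(2*L+1)) * ∏ k ∈ Finset.range L, (1 + q^(2*k+1) + q^(4*k+2)))
        - c^2 * ((1 - (c^2)^2*q^(2*L+1)) * ∏ k ∈ Finset.range L, (1 + q^(2*k+1) + q^(4*k+2))) := by
        rw [Ssum q hq0 hq c hc hc0 L, Ssum q hq0 hq (c^2) hc2 hc20 L]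
    _ = (∏ k ∈ Finset.range L, (1 + q^(2*k+1) + q^(4*k+2))) * (c - c^2) := by
        rw [show ((c^2)^2 : F) = c from by linear_combination c*(c_cube c hc)]
        ring

lemma rhs_eq (hq : ∀ m : ℕ, 1 - q^(m+1) ≠ 0) (L : ℕ) :
    qPochG (q^3) (q^6) L / qPochG q (q^2) L
      = ∏ k ∈ Finset.range L, (1 + q^(2*k+1) + q^(4*k+2)) := by
  rw [qPochG, qPochG, ← Finset.prod_div_distrib]
  apply Finset.prod_congr rfl
  intro k _
  have h : 1 - q * (q^2)^k ≠ 0 := by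
    have h := hq (2*k)
    rw [show q^(2*k+1) = q * (q^2)^k from by ring] at h
    exact h
  rw [div_eq_iff h]
  ring

noncomputable abbrev KK : Type := CyclotomicField 3 ℚ

instance : IsCyclotomicExtension {3} ℚ KK := CyclotomicField.isCyclotomicExtension 3 ℚ

noncomputable def om : KK := IsCyclotomicExtension.zeta 3 ℚ KK

lemma om_prop : om^2 + om + 1 = 0 := by
  have hζ : IsPrimitiveRoot om 3 := IsCyclotomicExtension.zeta_spec 3 ℚ KK
  have h1 : om ≠ 1 := hζ.ne_one (by norm_num)
  have h3 : om^3 = 1 := hζ.pow_eq_one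
  have hfac : (om - 1) * (om^2 + om + 1) = 0 := by linear_combination h3
  rcases mul_eq_zero.1 hfac with h | h
  · exact absurd (by linear_combination h : om = 1) h1
  · exact h

noncomputable abbrev FF : Type := RatFunc KK

noncomputable instance : CharZero FF :=
  charZero_of_injective_algebraMap (algebraMap KK FF).injective

lemma FF_three_ne : (3 : FF) ≠ 0 := by
  norm_num

lemma FF_X_ne (m : ℕ) : (1 : FF) - RatFunc.X ^ (m+1) ≠ 0 := by
  have : (1 : FF) - RatFunc.X ^ (m+1)
      = algebraMap (Polynomial KK) FF (1 - Polynomial.X ^ (m+1)) := by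
    rw [map_sub, map_one, map_pow, RatFunc.algebraMap_X]
  rw [this]
  rw [Ne, map_eq_zero_iff _ (IsFractionRing.injective _ _)]
  intro h
  have := congrArg (Polynomial.eval 0) h
  simp at this

noncomputable def psi0 : Polynomial ℚ →+* FF :=
  (algebraMap (Polynomial KK) FF).comp (Polynomial.mapRingHom (algebraMap ℚ KK))

lemma psi0_inj : Function.Injective psi0 :=
  (IsFractionRing.injective (Polynomial KK) FF).comp
    (Polynomial.map_injective _ (algebraMap ℚ KK).injective)

lemma psi0_cond : nonZeroDivisors (Polynomial ℚ) ≤ Submonoid.comap psi0 (nonZeroDivisors FF) := by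
  intro p hp
  rw [Submonoid.mem_comap]
  rw [mem_nonZeroDivisors_iff_ne_zero] at hp ⊢
  intro h
  apply hp
  apply psi0_inj
  simpa using h

noncomputable def phi : RatFunc ℚ →+* FF := RatFunc.liftRingHom psi0 psi0_cond

lemma phi_algebraMap (p : Polynomial ℚ) : phi (algebraMap _ _ p) = psi0 p := by
  have := RatFunc.liftRingHom_apply_div psi0 psi0_cond p 1
  simp only [map_one, div_one] at this
  exact this

lemma phi_X : phi RatFunc.X = RatFunc.X := by
  rw [← RatFunc.algebraMap_X, phi_algebraMap]
  show algebraMap (Polynomial KK) FF (Polynomial.map _ Polynomial.X) = _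
  rw [Polynomial.map_X, RatFunc.algebraMap_X]

lemma phi_inj : Function.Injective phi := phi.injective

lemma phi_qPoch (a q : RatFunc ℚ) (n : ℕ) : phi (qPoch a q n) = qPochG (phi a) (phi q) n := by
  rw [qPoch, qPochG, map_prod]
  apply Finset.prod_congr rfl
  intro k _
  rw [map_sub, map_one, map_mul, map_pow]

lemma phi_qBinom (q : RatFunc ℚ) (t b : ℤ) : phi (qBinom q t b) = qBinomG (phi q) t b := by
  rw [qBinom, qBinomG]
  split_ifs with h
  · rw [map_div₀, map_mul, phi_qPoch, phi_qPoch, phi_qPoch]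
  · exact map_zero phi

/-- Theorem 2.5: for `L ≥ 0`,
`∑_j (-1)^j q^{j²} ((j+1)/3) [2L+1 choose L-j]_{q²} = (q³;q⁶)_L/(q;q²)_L`.
The sum is taken over `-(L+1) ≤ j ≤ L`, which covers all nonzero terms. -/
theorem statement10 (L : ℕ) :
    ∑ j ∈ Finset.Icc (-(L : ℤ) - 1) (L : ℤ),
      (-1 : RatFunc ℚ) ^ j * Xq ^ (j ^ 2) * (leg3 (j + 1) : RatFunc ℚ) *
        qBinom (Xq ^ 2) (2 * L + 1) ((L : ℤ) - j) =
    qPoch (Xq ^ 3) (Xq ^ 6) L / qPoch Xq (Xq ^ 2) L := by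
  apply phi_inj
  have hq : ∀ m : ℕ, (1 : FF) - RatFunc.X ^ (m+1) ≠ 0 := FF_X_ne
  have hX0 : (RatFunc.X : FF) ≠ 0 := RatFunc.X_ne_zero
  rw [map_sum, map_div₀, phi_qPoch, phi_qPoch]
  have hXq : phi Xq = RatFunc.X := by rw [Xq, phi_X]
  simp only [map_pow, hXq]
  rw [rhs_eq RatFunc.X hq L]
  have hterm : ∀ j ∈ Finset.Icc (-(L : ℤ) - 1) (L : ℤ),
      phi ((-1 : RatFunc ℚ) ^ j * Xq ^ (j ^ 2) * (leg3 (j + 1) : RatFunc ℚ) *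
        qBinom (Xq ^ 2) (2 * L + 1) ((L : ℤ) - j))
      = (-1 : FF) ^ j * RatFunc.X ^ (j ^ 2) * (leg3 (j + 1) : FF) *
        qBinomG (RatFunc.X ^ 2) (2 * (L:ℤ) + 1) ((L : ℤ) - j) := by
    intro j _
    rw [map_mul, map_mul, map_mul, phi_qBinom, map_zpow₀, map_zpow₀, map_neg, map_one,
      map_intCast, map_pow, hXq]
  rw [Finset.sum_congr rfl hterm]
  have hc : (algebraMap KK FF om)^2 + (algebraMap KK FF om) + 1 = 0 := by
    have := congrArg (algebraMap KK FF) om_prop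
    rw [map_add, map_add, map_pow, map_one, map_zero] at this
    exact this
  exact keyGen RatFunc.X (algebraMap KK FF om) hX0 hq hc FF_three_ne L
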